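/- The heart D^{≤0} ∩ D^{≥0} of a t-structure on a triangulated category is an abelian category, where kernels and cokernels are computed via truncations of mapping cones. -/

import Mathlib

open CategoryTheory Limits Pretriangulated

universe v u

variable (D : Type u) [Category.{v} D] [Preadditive D] [HasZeroObject D] [HasShift D ℤ]
  [∀ n : ℤ, (CategoryTheory.shiftFunctor D n).Additive] [Pretriangulated D]

/-- A t-structure on a triangulated category `D`, in the classical (BBD) formulation: a
pair of strictly full subcategories `(D^{≤0}, D^{≥0})` (given as iso-closed sets `le`, `ge`
of objects) such that (i) `D^{≤0}[1] ⊆ D^{≤0}` and `D^{≥0}[-1] ⊆ D^{≥0}`;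
(ii) `Hom(X, Y[-1]) = 0` for `X ∈ D^{≤0}`, `Y ∈ D^{≥0}`; (iii) every object `X` sits in a
distinguished triangle `X₀ → X → X₁ → X₀[1]` with `X₀ ∈ D^{≤0}` and `X₁ ∈ D^{≥0}[-1]`. -/
structure ClassicalTStructure where
  le : Set D
  ge : Set D
  le_iso : ∀ {X Y : D}, (X ≅ Y) → X ∈ le → Y ∈ le
  ge_iso : ∀ {X Y : D}, (X ≅ Y) → X ∈ ge → Y ∈ ge
  le_shift : ∀ X ∈ le, X⟦(1 : ℤ)⟧ ∈ le
  ge_shift : ∀ X ∈ ge, X⟦(-1 : ℤ)⟧ ∈ ge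
  hom_zero : ∀ ⦃X Y : D⦄, X ∈ le → Y ∈ ge → ∀ f : X ⟶ Y⟦(-1 : ℤ)⟧, f = 0
  exists_triangle : ∀ X : D, ∃ (X₀ X₁ : D) (f : X₀ ⟶ X) (g : X ⟶ X₁) (h : X₁ ⟶ X₀⟦(1 : ℤ)⟧),
    X₀ ∈ le ∧ X₁⟦(1 : ℤ)⟧ ∈ ge ∧ Triangle.mk f g h ∈ distTriang D

namespace ClassicalTStructure

variable {D}
variable (t : ClassicalTStructure D)

open ZeroObject

/-- `Hom(X, Y) = 0` if `X ∈ D^{≤0}` and `Y ∈ D^{≥1}`. -/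
lemma zero₂ {X Y : D} (hX : X ∈ t.le) (hY : Y⟦(1 : ℤ)⟧ ∈ t.ge) (f : X ⟶ Y) : f = 0 := by
  have e : (Y⟦(1 : ℤ)⟧)⟦(-1 : ℤ)⟧ ≅ Y :=
    (shiftFunctorCompIsoId D (1 : ℤ) (-1 : ℤ) (by omega)).app Y
  have h := t.hom_zero hX hY (f ≫ e.inv)
  rw [← cancel_mono e.inv, h, zero_comp]

/-- `Hom(X[1], Y) = 0` if `X ∈ D^{≤0}` and `Y ∈ D^{≥0}`. -/
lemma zero₃ {X Y : D} (hX : X ∈ t.le) (hY : Y ∈ t.ge) (f : X⟦(1 : ℤ)⟧ ⟶ Y) : f = 0 := by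
  have e : (X⟦(1 : ℤ)⟧)⟦(-1 : ℤ)⟧ ≅ X :=
    (shiftFunctorCompIsoId D (1 : ℤ) (-1 : ℤ) (by omega)).app X
  have h := t.hom_zero hX hY (e.inv ≫ (shiftFunctor D (-1 : ℤ)).map f)
  have h2 : (shiftFunctor D (-1 : ℤ)).map f = 0 := by
    rw [← cancel_epi e.inv, h, comp_zero]
  exact ((shiftFunctor D (-1 : ℤ)).map_eq_zero_iff).mp h2

lemma ge_of_shift {Y : D} (hY : Y⟦(1 : ℤ)⟧ ∈ t.ge) : Y ∈ t.ge := by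
  have e : (Y⟦(1 : ℤ)⟧)⟦(-1 : ℤ)⟧ ≅ Y :=
    (shiftFunctorCompIsoId D (1 : ℤ) (-1 : ℤ) (by omega)).app Y
  exact t.ge_iso e (t.ge_shift _ hY)

lemma isZero_of_shift {X : D} (n : ℤ) (h : IsZero (X⟦n⟧)) : IsZero X := by
  rw [IsZero.iff_id_eq_zero] at h ⊢
  exact ((shiftFunctor D n).map_eq_zero_iff).mp (by simpa using h)

lemma isZero_shift {X : D} (n : ℤ) (h : IsZero X) : IsZero (X⟦n⟧) := by
  rw [IsZero.iff_id_eq_zero] at h ⊢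
  simpa using congrArg (shiftFunctor D n).map h

/-- `D^{≤0}` is stable under extensions. -/
lemma ext_le {T : Triangle D} (hT : T ∈ distTriang D) (h₁ : T.obj₁ ∈ t.le)
    (h₃ : T.obj₃ ∈ t.le) : T.obj₂ ∈ t.le := by
  obtain ⟨B₀, B₁, a, b, c, hB₀, hB₁, hTB⟩ := t.exists_triangle T.obj₂
  have hb : b = 0 := by
    have h1 : T.mor₁ ≫ b = 0 := t.zero₂ h₁ hB₁ _
    obtain ⟨w, hw⟩ := Triangle.yoneda_exact₂ T hT b h1
    rw [hw, t.zero₂ h₃ hB₁ w, comp_zero]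
  have hz : IsZero B₁ := by
    obtain ⟨g, hg⟩ := Triangle.yoneda_exact₃ (Triangle.mk a b c) hTB (𝟙 B₁)
      (by simp [hb]; exact zero_comp)
    rw [IsZero.iff_id_eq_zero, hg, t.zero₂ (t.le_shift _ hB₀) hB₁ g]; exact comp_zero
  have : IsIso a := (Triangle.isZero₃_iff_isIso₁ (Triangle.mk a b c) hTB).mp hz
  exact t.le_iso (asIso a) hB₀

/-- Shifting a distinguished triangle whose middle term is a `⟦-1⟧`-shift. -/
lemma shift_dist {A B C' : D} {a : A ⟶ B⟦(-1 : ℤ)⟧} {b : B⟦(-1 : ℤ)⟧ ⟶ C'}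
    {c : C' ⟶ A⟦(1 : ℤ)⟧} (hT : Triangle.mk a b c ∈ distTriang D) :
    ∃ (a' : A⟦(1 : ℤ)⟧ ⟶ B) (b' : B ⟶ C'⟦(1 : ℤ)⟧)
      (c' : C'⟦(1 : ℤ)⟧ ⟶ (A⟦(1 : ℤ)⟧)⟦(1 : ℤ)⟧),
      Triangle.mk a' b' c' ∈ distTriang D := by
  have hR : (Triangle.mk a b c).rotate.rotate.rotate ∈ distTriang D :=
    rot_of_distTriang _ (rot_of_distTriang _ (rot_of_distTriang _ hT))
  set R := (Triangle.mk a b c).rotate.rotate.rotate with hRdef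
  have e : (B⟦(-1 : ℤ)⟧)⟦(1 : ℤ)⟧ ≅ B :=
    (shiftFunctorCompIsoId D (-1 : ℤ) (1 : ℤ) (by omega)).app B
  refine ⟨R.mor₁ ≫ e.hom, e.inv ≫ R.mor₂, R.mor₃, ?_⟩
  refine isomorphic_distinguished _ hR _ ?_
  exact Triangle.isoMk _ _ (Iso.refl _) e.symm (Iso.refl _) (by simp [Triangle.mk]; erw [Category.assoc, e.hom_inv_id, Category.comp_id, Category.id_comp])
    (by simp [Triangle.mk]; erw [Category.comp_id]; rfl) (by simp [Triangle.mk]; erw [CategoryTheory.Functor.map_id, Category.comp_id, Category.id_comp])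

/-- `D^{≥0}` is stable under extensions. -/
lemma ext_ge {T : Triangle D} (hT : T ∈ distTriang D) (h₁ : T.obj₁ ∈ t.ge)
    (h₃ : T.obj₃ ∈ t.ge) : T.obj₂ ∈ t.ge := by
  obtain ⟨B₀, B₁, a, b, c, hB₀, hB₁, hTB⟩ := t.exists_triangle (T.obj₂⟦(-1 : ℤ)⟧)
  obtain ⟨a', b', c', hT'⟩ := shift_dist hTB
  have ha' : a' = 0 := by
    obtain ⟨v, hv⟩ := Triangle.coyoneda_exact₂ T hT a' (t.zero₃ hB₀ h₃ (a' ≫ T.mor₂))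
    rw [hv, t.zero₃ hB₀ h₁ v, zero_comp]
  have hz : IsZero ((Triangle.mk a' b' c').rotate.obj₃) := by
    obtain ⟨s, hs⟩ := Triangle.coyoneda_exact₃ (Triangle.mk a' b' c').rotate
      (rot_of_distTriang _ hT') (𝟙 _) (by simp [ha']; erw [Functor.map_zero, neg_zero, comp_zero])
    rw [IsZero.iff_id_eq_zero, hs, t.zero₃ (t.le_shift _ hB₀) hB₁ s]; exact zero_comp
  have hz1 : IsZero (B₀⟦(1 : ℤ)⟧) := isZero_of_shift 1 hz
  have : IsIso b' := (Triangle.isZero₁_iff_isIso₂ (Triangle.mk a' b' c') hT').mp hz1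
  exact t.ge_iso (asIso b').symm hB₁

lemma zero_mem : (0 : D) ∈ t.le ∧ (0 : D) ∈ t.ge := by
  obtain ⟨X₀, X₁, a, b, c, hX₀, hX₁, hT⟩ := t.exists_triangle 0
  have h2 : IsZero ((Triangle.mk a b c).obj₂) := isZero_zero D
  have hc : IsIso c := (Triangle.isZero₂_iff_isIso₃ (Triangle.mk a b c) hT).mp h2
  have hX₁le : X₁ ∈ t.le := t.le_iso (asIso c).symm (t.le_shift _ hX₀)
  have hzX₁ : IsZero X₁ := by
    rw [IsZero.iff_id_eq_zero]
    exact t.zero₂ hX₁le hX₁ (𝟙 X₁)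
  constructor
  · have : IsZero (X₀⟦(1 : ℤ)⟧) := hzX₁.of_iso (asIso c).symm
    have hX₀z : IsZero X₀ := isZero_of_shift _ this
    exact t.le_iso hX₀z.isoZero hX₀
  · have : IsZero (X₁⟦(1 : ℤ)⟧) := isZero_shift _ hzX₁
    exact t.ge_iso this.isoZero hX₁

/-- The heart of the t-structure. -/
abbrev Heart : Type u := ObjectProperty.FullSubcategory (fun X : D => X ∈ t.le ∧ X ∈ t.ge)

lemma hasZeroObject : HasZeroObject t.Heart := by
  refine ⟨⟨⟨0, t.zero_mem.1, t.zero_mem.2⟩, ?_⟩⟩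
  rw [IsZero.iff_id_eq_zero]
  ext

/-- The central construction: kernels, cokernels, and the normality statements
for a morphism in the heart, stated at the level of `D`. -/
lemma key {X Y : t.Heart} (f : X.obj ⟶ Y.obj) :
    ∃ (K Q : t.Heart) (k : K.obj ⟶ X.obj) (q : Y.obj ⟶ Q.obj),
      k ≫ f = 0 ∧ f ≫ q = 0 ∧
      (∀ (W : t.Heart) (u : W.obj ⟶ X.obj), u ≫ f = 0 →
        ∃! l : W.obj ⟶ K.obj, l ≫ k = u) ∧
      (∀ (W : t.Heart) (u : Y.obj ⟶ W.obj), f ≫ u = 0 →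
        ∃! l : Q.obj ⟶ W.obj, q ≫ l = u) ∧
      (IsZero K.obj → ∃ (Co : t.Heart) (c : Y.obj ⟶ Co.obj), f ≫ c = 0 ∧
          ∀ (W : t.Heart) (u : W.obj ⟶ Y.obj), u ≫ c = 0 →
            ∃! l : W.obj ⟶ X.obj, l ≫ f = u) ∧
      (IsZero Q.obj → ∃ (N : t.Heart) (n : N.obj ⟶ X.obj), n ≫ f = 0 ∧
          ∀ (W : t.Heart) (u : X.obj ⟶ W.obj), n ≫ u = 0 →
            ∃! l : Y.obj ⟶ W.obj, f ≫ l = u) := by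
  obtain ⟨Z, g, h, hT⟩ := Pretriangulated.distinguished_cocone_triangle f
  set T : Triangle D := Triangle.mk f g h with hTdef
  have hZle : Z ∈ t.le :=
    t.ext_le (rot_of_distTriang _ hT) Y.property.1 (t.le_shift _ X.property.1)
  have hZ1ge : Z⟦(-1 : ℤ)⟧ ∈ t.ge :=
    t.ext_ge (inv_rot_of_distTriang _ (inv_rot_of_distTriang _ hT))
      (t.ge_shift _ Y.property.2) X.property.2
  obtain ⟨K, Q', α, β, γ, hK, hQ', hT2⟩ := t.exists_triangle (Z⟦(-1 : ℤ)⟧)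
  have hQge : Q' ∈ t.ge := t.ge_of_shift hQ'
  have hKge : K ∈ t.ge :=
    t.ext_ge (inv_rot_of_distTriang _ hT2) (t.ge_shift _ hQge) hZ1ge
  obtain ⟨α', β', γ', hT3⟩ := shift_dist hT2
  -- α' : K⟦1⟧ ⟶ Z, β' : Z ⟶ Q'⟦1⟧, γ' : Q'⟦1⟧ ⟶ K⟦1⟧⟦1⟧
  have hQle : Q'⟦(1 : ℤ)⟧ ∈ t.le :=
    t.ext_le (rot_of_distTriang _ hT3) hZle (t.le_shift _ (t.le_shift _ hK))
  have hT' : T.invRotate ∈ distTriang D := inv_rot_of_distTriang _ hT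
  refine ⟨⟨K, hK, hKge⟩, ⟨Q'⟦(1 : ℤ)⟧, hQle, hQ'⟩, α ≫ T.invRotate.mor₁, g ≫ β',
    ?_, ?_, ?_, ?_, ?_, ?_⟩
  · have h2 : T.invRotate.mor₁ ≫ f = 0 := comp_distTriang_mor_zero₁₂ _ hT'
    erw [Category.assoc, h2, comp_zero]
  · have h2 : f ≫ g = 0 := comp_distTriang_mor_zero₁₂ _ hT
    erw [← Category.assoc, h2, zero_comp]
  · -- kernel universal property
    intro W u hu
    have inj : ∀ (m : W.obj ⟶ K), m ≫ (α ≫ T.invRotate.mor₁) = 0 → m = 0 := by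
      intro m hm
      erw [← Category.assoc] at hm
      obtain ⟨n, hn⟩ := Triangle.coyoneda_exact₂ _ (inv_rot_of_distTriang _ hT') (m ≫ α) hm
      erw [t.hom_zero (X := W.obj) (Y := Y.obj) W.property.1 Y.property.2 n,
        zero_comp] at hn
      obtain ⟨p, hp⟩ := Triangle.coyoneda_exact₂ _ (inv_rot_of_distTriang _ hT2) m hn
      erw [hp, t.hom_zero (X := W.obj) (Y := Q') W.property.1 hQge p, zero_comp]; rfl
    obtain ⟨v, hv⟩ := Triangle.coyoneda_exact₂ _ hT' u hu
    have hvβ : v ≫ β = 0 := t.zero₂ W.property.1 hQ' _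
    obtain ⟨l, hl⟩ := Triangle.coyoneda_exact₂ _ hT2 v hvβ
    have hl' : v = l ≫ α := hl
    have hfac : l ≫ (α ≫ T.invRotate.mor₁) = u := by
      erw [← Category.assoc, ← hl', ← hv]
    refine ⟨l, hfac, ?_⟩
    intro m hm
    erw [← sub_eq_zero]
    exact inj _ (by erw [Preadditive.sub_comp, hm, hfac, sub_self])
  · -- cokernel universal property
    intro W u hu
    have inj : ∀ (m : Q'⟦(1 : ℤ)⟧ ⟶ W.obj), (g ≫ β') ≫ m = 0 → m = 0 := by
      intro m hm
      erw [Category.assoc] at hm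
      obtain ⟨n, hn⟩ := Triangle.yoneda_exact₃ _ hT (β' ≫ m) hm
      erw [t.zero₃ (X := X.obj) (Y := W.obj) X.property.1 W.property.2 n,
        comp_zero] at hn
      obtain ⟨p, hp⟩ := Triangle.yoneda_exact₃ _ hT3 m hn
      erw [hp, t.zero₃ (X := K⟦(1 : ℤ)⟧) (Y := W.obj) (t.le_shift _ hK)
        W.property.2 p, comp_zero]; rfl
    obtain ⟨v, hv⟩ := Triangle.yoneda_exact₂ _ hT u hu
    have hv' : u = g ≫ v := hv
    have hαv : α' ≫ v = 0 := t.zero₃ hK W.property.2 _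
    obtain ⟨l, hl⟩ := Triangle.yoneda_exact₂ _ hT3 v hαv
    have hl' : v = β' ≫ l := hl
    have hfac : (g ≫ β') ≫ l = u := by erw [Category.assoc, ← hl', ← hv']
    refine ⟨l, hfac, ?_⟩
    intro m hm
    erw [← sub_eq_zero]
    exact inj _ (by erw [Preadditive.comp_sub, hm, hfac, sub_self])
  · -- mono branch
    intro hKzero
    have hK1z : IsZero (K⟦(1 : ℤ)⟧) := isZero_shift 1 hKzero
    have : IsIso β' := (Triangle.isZero₁_iff_isIso₂ (Triangle.mk α' β' γ') hT3).mp hK1z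
    have hZge : Z ∈ t.ge := t.ge_iso (asIso β').symm hQ'
    refine ⟨⟨Z, hZle, hZge⟩, g, comp_distTriang_mor_zero₁₂ _ hT, ?_⟩
    intro W u hu
    obtain ⟨l, hl⟩ := Triangle.coyoneda_exact₂ _ hT u hu
    have hl' : u = l ≫ f := hl
    refine ⟨l, hl'.symm, ?_⟩
    intro m hm
    have inj : ∀ (mm : W.obj ⟶ X.obj), mm ≫ f = 0 → mm = 0 := by
      intro mm hmm
      obtain ⟨n, hn⟩ := Triangle.coyoneda_exact₂ _ hT' mm hmm
      erw [hn, t.hom_zero (X := W.obj) (Y := Z) W.property.1 hZge n, zero_comp]; rfl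
    erw [← sub_eq_zero]
    exact inj _ (by erw [Preadditive.sub_comp, hm, ← hl', sub_self])
  · -- epi branch
    intro hQzero
    have hQ'z : IsZero Q' := isZero_of_shift 1 hQzero
    have : IsIso α := (Triangle.isZero₃_iff_isIso₁ (Triangle.mk α β γ) hT2).mp hQ'z
    have hZm1le : Z⟦(-1 : ℤ)⟧ ∈ t.le := t.le_iso (asIso α) hK
    refine ⟨⟨Z⟦(-1 : ℤ)⟧, hZm1le, hZ1ge⟩, T.invRotate.mor₁,
      comp_distTriang_mor_zero₁₂ _ hT', ?_⟩
    intro W u hu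
    obtain ⟨l, hl⟩ := Triangle.yoneda_exact₂ _ hT' u hu
    have hl' : u = f ≫ l := hl
    refine ⟨l, hl'.symm, ?_⟩
    intro m hm
    have inj : ∀ (mm : Y.obj ⟶ W.obj), f ≫ mm = 0 → mm = 0 := by
      intro mm hmm
      obtain ⟨n, hn⟩ := Triangle.yoneda_exact₂ _ hT mm hmm
      have hn' : mm = g ≫ n := hn
      have e : (Z⟦(-1 : ℤ)⟧)⟦(1 : ℤ)⟧ ≅ Z :=
        (shiftFunctorCompIsoId D (-1 : ℤ) (1 : ℤ) (by omega)).app Z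
      have hn0 : n = 0 := by
        have h0 := t.zero₃ hZm1le W.property.2 (e.hom ≫ n)
        erw [← cancel_epi e.hom, comp_zero]
        exact h0
      erw [hn', hn0, comp_zero]
    erw [← sub_eq_zero]
    exact inj _ (by erw [Preadditive.comp_sub, hm, ← hl', sub_self])

lemma hom_comp_eq_zero {X Y Z : t.Heart} {f : X ⟶ Y} {g : Y ⟶ Z} (h : f ≫ g = 0) :
    f.hom ≫ g.hom = 0 := by
  simpa using congrArg (·.hom) h

lemma hasKernels : HasKernels t.Heart := by
  refine ⟨fun {X Y} f => ?_⟩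
  obtain ⟨K, Q, k, q, wk, wq, hker, -, -, -⟩ := t.key f.hom
  exact HasLimit.mk ⟨_, KernelFork.IsLimit.ofι (W := K) (ObjectProperty.homMk k)
    (by ext; simpa using wk)
    (fun u hu => ObjectProperty.homMk (hker _ u.hom (t.hom_comp_eq_zero hu)).choose)
    (fun u hu => by ext; simpa using (hker _ u.hom (t.hom_comp_eq_zero hu)).choose_spec.1)
    (fun u hu m hm => by
      ext; simpa using (hker _ u.hom (t.hom_comp_eq_zero hu)).choose_spec.2 m.hom
        (by simpa using congrArg (·.hom) hm))⟩

lemma hasCokernels : HasCokernels t.Heart := by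
  refine ⟨fun {X Y} f => ?_⟩
  obtain ⟨K, Q, k, q, wk, wq, -, hcoker, -, -⟩ := t.key f.hom
  exact HasColimit.mk ⟨_, CokernelCofork.IsColimit.ofπ (Z := Q) (ObjectProperty.homMk q)
    (by ext; simpa using wq)
    (fun u hu => ObjectProperty.homMk (hcoker _ u.hom (t.hom_comp_eq_zero hu)).choose)
    (fun u hu => by ext; simpa using (hcoker _ u.hom (t.hom_comp_eq_zero hu)).choose_spec.1)
    (fun u hu m hm => by
      ext; simpa using (hcoker _ u.hom (t.hom_comp_eq_zero hu)).choose_spec.2 m.hom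
        (by simpa using congrArg (·.hom) hm))⟩

lemma normalMono {X Y : t.Heart} (f : X ⟶ Y) [hf : Mono f] : Nonempty (NormalMono f) := by
  obtain ⟨K, Q, k, q, wk, wq, hker, -, hmono, -⟩ := t.key f.hom
  have hk0d : k = 0 := by
    have := hf.right_cancellation (Z := K) (ObjectProperty.homMk k) 0 (by ext; simpa using wk)
    simpa using congrArg (·.hom) this
  have hKz : IsZero K.obj := by
    rw [IsZero.iff_id_eq_zero]
    obtain ⟨l, -, hu⟩ := hker K 0 zero_comp
    exact (hu (𝟙 K.obj) (show 𝟙 K.obj ≫ k = 0 by rw [Category.id_comp, hk0d])).trans (hu 0 zero_comp).symm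
  obtain ⟨Co, c, wc, hc⟩ := hmono hKz
  exact ⟨⟨Co, ObjectProperty.homMk c, (by ext; simpa using wc), KernelFork.IsLimit.ofι f _
      (fun u hu => ObjectProperty.homMk (hc _ u.hom (t.hom_comp_eq_zero hu)).choose)
      (fun u hu => by ext; simpa using (hc _ u.hom (t.hom_comp_eq_zero hu)).choose_spec.1)
      (fun u hu m hm => by
        ext; simpa using (hc _ u.hom (t.hom_comp_eq_zero hu)).choose_spec.2 m.hom
          (by simpa using congrArg (·.hom) hm))⟩⟩

lemma normalEpi {X Y : t.Heart} (f : X ⟶ Y) [hf : Epi f] : Nonempty (NormalEpi f) := by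
  obtain ⟨K, Q, k, q, wk, wq, -, hcoker, -, hepi⟩ := t.key f.hom
  have hq0d : q = 0 := by
    have := hf.left_cancellation (Z := Q) (ObjectProperty.homMk q) 0 (by ext; simpa using wq)
    simpa using congrArg (·.hom) this
  have hQz : IsZero Q.obj := by
    rw [IsZero.iff_id_eq_zero]
    obtain ⟨l, -, hu⟩ := hcoker Q 0 comp_zero
    exact (hu (𝟙 Q.obj) (show q ≫ 𝟙 Q.obj = 0 by rw [Category.comp_id, hq0d])).trans (hu 0 comp_zero).symm
  obtain ⟨N, n, wn, hn⟩ := hepi hQz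
  exact ⟨⟨N, ObjectProperty.homMk n, (by ext; simpa using wn), CokernelCofork.IsColimit.ofπ f _
      (fun u hu => ObjectProperty.homMk (hn _ u.hom (t.hom_comp_eq_zero hu)).choose)
      (fun u hu => by ext; simpa using (hn _ u.hom (t.hom_comp_eq_zero hu)).choose_spec.1)
      (fun u hu m hm => by
        ext; simpa using (hn _ u.hom (t.hom_comp_eq_zero hu)).choose_spec.2 m.hom
          (by simpa using congrArg (·.hom) hm))⟩⟩

lemma hasFiniteProducts : HasFiniteProducts t.Heart := by
  have : HasZeroObject t.Heart := t.hasZeroObject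
  have : ∀ (P Q : t.Heart), HasLimit (pair P Q) := by
    intro P Q
    have hmem : (P.obj ⊞ Q.obj) ∈ t.le ∧ (P.obj ⊞ Q.obj) ∈ t.ge :=
      ⟨t.ext_le (binaryBiproductTriangle_distinguished P.obj Q.obj) P.property.1 Q.property.1,
       t.ext_ge (binaryBiproductTriangle_distinguished P.obj Q.obj) P.property.2 Q.property.2⟩
    exact HasLimit.mk ⟨BinaryFan.mk (P := (⟨P.obj ⊞ Q.obj, hmem⟩ : t.Heart))
        (ObjectProperty.homMk (biprod.fst : P.obj ⊞ Q.obj ⟶ P.obj))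
        (ObjectProperty.homMk (biprod.snd : P.obj ⊞ Q.obj ⟶ Q.obj)),
      BinaryFan.isLimitMk (fun s => ObjectProperty.homMk (biprod.lift s.fst.hom s.snd.hom))
        (fun s => by ext; simp) (fun s => by ext; simp)
        (fun s m h1 h2 => by
          ext
          · simpa using congrArg (·.hom) h1
          · simpa using congrArg (·.hom) h2)⟩
  have : HasBinaryProducts t.Heart := hasBinaryProducts_of_hasLimit_pair _
  exact hasFiniteProducts_of_has_binary_and_terminal

end ClassicalTStructure

/-- the heart `D^{≤0} ∩ D^{≥0}` of a t-structure on a triangulated category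
is an abelian category (where kernels and cokernels are computed via truncations of
mapping cones). -/
theorem heart_is_abelian (t : ClassicalTStructure D) :
    Nonempty (Abelian (ObjectProperty.FullSubcategory (fun X : D => X ∈ t.le ∧ X ∈ t.ge))) := by
  letI : HasFiniteProducts t.Heart := t.hasFiniteProducts
  letI : HasKernels t.Heart := t.hasKernels
  letI : HasCokernels t.Heart := t.hasCokernels
  letI : IsNormalMonoCategory t.Heart := ⟨fun f _ => t.normalMono f⟩
  letI : IsNormalEpiCategory t.Heart := ⟨fun f _ => t.normalEpi f⟩
  exact ⟨{}⟩
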